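/- With Q stochastic satisfying the symmetric structure condition, Γ skew-symmetric with Γ(x,y) ≥ −π(y)Q(y,x), π everywhere positive, define A_Γ(x,y) = min(1, R_Γ(x,y)) with R_Γ the non-reversible Hastings ratio, and P_Γ(x,y) = Q(x,y)A_Γ(x,y) for x ≠ y, with P_Γ(x,x) = Q(x,x) + ∑_{z≠x} Q(x,z)(1 − A_Γ(x,z)). Then π(x)P_Γ(x,y) − π(y)P_Γ(y,x) = Γ(x,y) for all x,y ∈ S. -/

import Mathlib

open scoped Classical

/-- the chain P_Γ produced by non-reversible Metropolis–Hastings has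
vorticity Γ, i.e. π(x)P_Γ(x,y) − π(y)P_Γ(y,x) = Γ(x,y) for all x, y. -/
theorem nrmh_chain_has_vorticity_Gamma
    (S : Type*) [Fintype S]
    (Q : S → S → ℝ) (Γ : S → S → ℝ) (π : S → ℝ)
    (hQnonneg : ∀ x y, 0 ≤ Q x y)
    (hQrow : ∀ x, ∑ y, Q x y = 1)
    (hsym : ∀ x y, Q x y = 0 → Q y x = 0)
    (hΓskew : ∀ x y, Γ x y = - Γ y x)
    (hπpos : ∀ x, 0 < π x)
    (hbound : ∀ x y, Γ x y ≥ - (π y * Q y x))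
    (R A P : S → S → ℝ)
    (hR : ∀ x y, R x y =
      if π x * Q x y = 0 then 1 else (Γ x y + π y * Q y x) / (π x * Q x y))
    (hA : ∀ x y, A x y = min 1 (R x y))
    (hPoff : ∀ x y, x ≠ y → P x y = Q x y * A x y)
    (hPdiag : ∀ x, P x x = Q x x + ∑ z ∈ Finset.univ.erase x, Q x z * (1 - A x z)) :
    ∀ x y, π x * P x y - π y * P y x = Γ x y := by
  intro x y
  by_cases hxy : x = y
  · subst hxy
    have h := hΓskew x x
    linarith
  · have hP1 := hPoff x y hxy
    have hP2 := hPoff y x (Ne.symm hxy)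
    by_cases hQ : Q x y = 0
    · have hQ' : Q y x = 0 := hsym x y hQ
      have h1 : Γ x y ≥ 0 := by have := hbound x y; rw [hQ'] at this; simpa using this
      have h2 : Γ y x ≥ 0 := by have := hbound y x; rw [hQ] at this; simpa using this
      have h0 : Γ x y = 0 := by have := hΓskew x y; linarith
      rw [hP1, hP2, hQ, hQ', h0]; ring
    · have hQ' : Q y x ≠ 0 := fun h => hQ (hsym y x h)
      have ha : 0 < π x * Q x y :=
        mul_pos (hπpos x) (lt_of_le_of_ne (hQnonneg x y) (Ne.symm hQ))
      have hb : 0 < π y * Q y x :=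
        mul_pos (hπpos y) (lt_of_le_of_ne (hQnonneg y x) (Ne.symm hQ'))
      have hRxy : R x y = (Γ x y + π y * Q y x) / (π x * Q x y) := by
        rw [hR]; simp [ne_of_gt ha]
      have hRyx : R y x = (Γ y x + π x * Q x y) / (π y * Q y x) := by
        rw [hR]; simp [ne_of_gt hb]
      have hskew := hΓskew x y
      have ha' : π x * Q x y ≠ 0 := ne_of_gt ha
      have hb' : π y * Q y x ≠ 0 := ne_of_gt hb
      rw [hP1, hP2, hA, hA, hRxy, hRyx]
      rcases le_or_gt (Γ x y + π y * Q y x) (π x * Q x y) with h | h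
      · have h1 : (Γ x y + π y * Q y x) / (π x * Q x y) ≤ 1 := by
          rw [div_le_one ha]; exact h
        have h2 : (1:ℝ) ≤ (Γ y x + π x * Q x y) / (π y * Q y x) := by
          rw [le_div_iff₀ hb]; linarith
        rw [min_eq_right h1, min_eq_left h2]
        field_simp [(hπpos x).ne', (hπpos y).ne']
        ring
      · have h1 : (1:ℝ) ≤ (Γ x y + π y * Q y x) / (π x * Q x y) := by
          rw [le_div_iff₀ ha]; linarith
        have h2 : (Γ y x + π x * Q x y) / (π y * Q y x) ≤ 1 := by
          rw [div_le_one hb]; linarith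
        rw [min_eq_left h1, min_eq_right h2]
        field_simp [(hπpos x).ne', (hπpos y).ne']
        rw [hskew]; ring
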